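/- Let G=(V,W) be an edge-weighted graph with positive generalized degrees and Vol(V)=1, and let 0 = λ_1 ≤ λ_2 ≤ ... ≤ λ_n be the eigenvalues of the normalized Laplacian L_D. Then for every integer 2 ≤ k ≤ n, the minimum normalized k-way cut satisfies f_k(G) ≥ Σ_{i=1}^k λ_i. -/

import Mathlib

open Finset Matrix

noncomputable section

/-- weighted cut between two vertex subsets: `w(X,Y) = ∑_{i∈X} ∑_{j∈Y} w_{ij}` -/
def wcut {n : ℕ} (W : Matrix (Fin n) (Fin n) ℝ) (X Y : Finset (Fin n)) : ℝ :=
  ∑ i ∈ X, ∑ j ∈ Y, W i j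

/-- generalized degree `d_i = ∑_j w_{ij}` -/
def gdeg {n : ℕ} (W : Matrix (Fin n) (Fin n) ℝ) (i : Fin n) : ℝ := ∑ j, W i j

/-- volume of a vertex subset: `Vol(U) = ∑_{i∈U} d_i` -/
def gvol {n : ℕ} (W : Matrix (Fin n) (Fin n) ℝ) (U : Finset (Fin n)) : ℝ :=
  ∑ i ∈ U, gdeg W i

/-- the normalized adjacency matrix `D^{-1/2} W D^{-1/2}` -/
def normAdj {n : ℕ} (W : Matrix (Fin n) (Fin n) ℝ) : Matrix (Fin n) (Fin n) ℝ :=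
  Matrix.of fun i j => W i j / (Real.sqrt (gdeg W i) * Real.sqrt (gdeg W j))

/-- the normalized Laplacian `L_D = I - D^{-1/2} W D^{-1/2}` -/
def normLap {n : ℕ} (W : Matrix (Fin n) (Fin n) ℝ) : Matrix (Fin n) (Fin n) ℝ :=
  1 - normAdj W

/-- the normalized modularity matrix `B_D = D^{-1/2} W D^{-1/2} - √d √dᵀ` -/
def modMat {n : ℕ} (W : Matrix (Fin n) (Fin n) ℝ) : Matrix (Fin n) (Fin n) ℝ :=
  normAdj W - Matrix.of fun i j => Real.sqrt (gdeg W i) * Real.sqrt (gdeg W j)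

/-- Euclidean inner product on `ℝ^n` -/
def dotR {n : ℕ} (u v : Fin n → ℝ) : ℝ := ∑ i, u i * v i

/-- a family of pairwise orthogonal unit-norm vectors of `ℝ^n` -/
def IsOrthonormalSys {m n : ℕ} (u : Fin m → Fin n → ℝ) : Prop :=
  ∀ i j, dotR (u i) (u j) = if i = j then 1 else 0

/-- spectral norm (largest singular value) of a real matrix -/
def specNorm {n : ℕ} (M : Matrix (Fin n) (Fin n) ℝ) : ℝ :=
  ‖Matrix.toEuclideanCLM (𝕜 := ℝ) M‖

/-- connectivity of the weighted graph (irreducibility of `W`) -/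
def gConnected {n : ℕ} (W : Matrix (Fin n) (Fin n) ℝ) : Prop :=
  (SimpleGraph.fromRel fun i j => W i j ≠ 0).Connected

/-- the `a`-th cluster of the partition encoded by `P : Fin n → Fin k` -/
def partSet {n k : ℕ} (P : Fin n → Fin k) (a : Fin k) : Finset (Fin n) :=
  univ.filter fun j => P j = a

/-- `(A,B)` is an `α`-volume regular pair:
for all `X ⊆ A`, `Y ⊆ B`, `|w(X,Y) - ρ(A,B) Vol(X) Vol(Y)| ≤ α √(Vol(A) Vol(B))`,
where `ρ(A,B) = w(A,B)/(Vol(A) Vol(B))`. -/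
def volReg {n : ℕ} (W : Matrix (Fin n) (Fin n) ℝ) (α : ℝ) (A B : Finset (Fin n)) : Prop :=
  ∀ X ⊆ A, ∀ Y ⊆ B,
    |wcut W X Y - wcut W A B / (gvol W A * gvol W B) * (gvol W X * gvol W Y)|
      ≤ α * Real.sqrt (gvol W A * gvol W B)

/-- isoperimetric number `h(G) = min_{U : Vol(U) ≤ 1/2} w(U, U̅)/Vol(U)` -/
def isoNum {n : ℕ} (W : Matrix (Fin n) (Fin n) ℝ) : ℝ :=
  sInf {r | ∃ U : Finset (Fin n), U.Nonempty ∧ gvol W U ≤ 1/2 ∧ r = wcut W U Uᶜ / gvol W U}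

/-- weighted cluster center of scalar vertex representatives -/
def sCenter {n k : ℕ} (d : Fin n → ℝ) (x : Fin n → ℝ) (P : Fin n → Fin k) (a : Fin k) : ℝ :=
  (∑ j ∈ partSet P a, d j)⁻¹ * ∑ j ∈ partSet P a, d j * x j

/-- weighted k-variance of scalar vertex representatives w.r.t. the partition `P` -/
def sVar {n k : ℕ} (d : Fin n → ℝ) (x : Fin n → ℝ) (P : Fin n → Fin k) : ℝ :=
  ∑ a, ∑ j ∈ partSet P a, d j * (x j - sCenter d x P a) ^ 2

/-- minimum weighted 2-variance `S_2²` of scalar vertex representatives -/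
def S2var {n : ℕ} (d : Fin n → ℝ) (x : Fin n → ℝ) : ℝ :=
  sInf {r | ∃ P : Fin n → Fin 2, Function.Surjective P ∧ r = sVar d x P}

/-- weighted cluster center of vector vertex representatives -/
def vCenter {n k m : ℕ} (d : Fin n → ℝ) (x : Fin n → Fin m → ℝ) (P : Fin n → Fin k) (a : Fin k) :
    Fin m → ℝ :=
  fun t => (∑ j ∈ partSet P a, d j)⁻¹ * ∑ j ∈ partSet P a, d j * x j t

/-- weighted k-variance `S_k²(P, X)` of vector vertex representatives w.r.t. the partition `P` -/
def kVar {n k m : ℕ} (d : Fin n → ℝ) (x : Fin n → Fin m → ℝ) (P : Fin n → Fin k) : ℝ :=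
  ∑ a, ∑ j ∈ partSet P a, d j * ∑ t, (x j t - vCenter d x P a t) ^ 2

/-- normalized k-way cut of the partition `P`  -/
def fkCut {n k : ℕ} (W : Matrix (Fin n) (Fin n) ℝ) (P : Fin n → Fin k) : ℝ :=
  ∑ a, ∑ b ∈ univ.filter (fun b => a < b),
    (1 / gvol W (partSet P a) + 1 / gvol W (partSet P b)) * wcut W (partSet P a) (partSet P b)

/-- minimum normalized k-way cut `f_k(G)` (minimum over k-partitions with nonempty parts) -/
def fkMin {n : ℕ} (k : ℕ) (W : Matrix (Fin n) (Fin n) ℝ) : ℝ :=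
  sInf {r | ∃ P : Fin n → Fin k, Function.Surjective P ∧ r = fkCut W P}

/-- normalized k-way Newman-Girvan modularity of the partition `P` -/
def QMod {n k : ℕ} (W : Matrix (Fin n) (Fin n) ℝ) (P : Fin n → Fin k) : ℝ :=
  ∑ a, (gvol W (partSet P a))⁻¹ *
    (∑ i ∈ partSet P a, ∑ j ∈ partSet P a, (W i j - gdeg W i * gdeg W j))

/-- squared Euclidean distance of a vector from a linear subspace of `ℝ^n` -/
def distSqToSub {n : ℕ} (u : Fin n → ℝ) (F : Submodule ℝ (Fin n → ℝ)) : ℝ :=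
  sInf {r | ∃ v ∈ F, r = dotR (u - v) (u - v)}


section helpers
variable {n k : ℕ}

lemma dotR_nonneg (v : Fin n → ℝ) : 0 ≤ dotR v v :=
  Finset.sum_nonneg fun i _ => mul_self_nonneg _

lemma complete_of_orthonormal {u : Fin n → Fin n → ℝ} (h : IsOrthonormalSys u) (p q : Fin n) :
    ∑ i, u i p * u i q = if p = q then 1 else 0 := by
  have hU : (Matrix.of u) * (Matrix.of u)ᵀ = 1 := by
    ext i j
    simpa [Matrix.mul_apply, Matrix.one_apply, dotR] using h i j
  have hU2 := mul_eq_one_comm.mp hU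
  have h3 := congrFun (congrFun hU2 p) q
  simpa [Matrix.mul_apply, Matrix.one_apply] using h3

lemma expand_complete {u : Fin n → Fin n → ℝ} (h : IsOrthonormalSys u) (v : Fin n → ℝ)
    (q : Fin n) : ∑ i, dotR v (u i) * u i q = v q := by
  calc ∑ i, dotR v (u i) * u i q = ∑ i, ∑ p, v p * (u i p * u i q) := by
        simp [dotR, Finset.sum_mul, mul_assoc]
    _ = ∑ p, v p * ∑ i, u i p * u i q := by
        rw [Finset.sum_comm]; simp [Finset.mul_sum]
    _ = v q := by
        simp only [complete_of_orthonormal h, mul_ite, mul_one, mul_zero]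
        simp

lemma parseval {u : Fin n → Fin n → ℝ} (h : IsOrthonormalSys u) (v : Fin n → ℝ) :
    ∑ i, (dotR v (u i)) ^ 2 = dotR v v := by
  have hv : ∀ q, v q = ∑ i, dotR v (u i) * u i q := fun q => (expand_complete h v q).symm
  calc ∑ i, (dotR v (u i)) ^ 2 = ∑ i, dotR v (u i) * ∑ q, v q * u i q := by
        apply Finset.sum_congr rfl; intro i _
        simp [dotR, sq]
    _ = ∑ q, v q * ∑ i, dotR v (u i) * u i q := by
        simp only [Finset.mul_sum]; rw [Finset.sum_comm]
        apply Finset.sum_congr rfl; intro q _; apply Finset.sum_congr rfl; intro i _; ring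
    _ = dotR v v := by simp only [expand_complete h]; rfl

end helpers

section helpers2
variable {n k : ℕ}

lemma rayleigh {W : Matrix (Fin n) (Fin n) ℝ} {lam : Fin n → ℝ} {u : Fin n → Fin n → ℝ}
    (h : IsOrthonormalSys u) (heig : ∀ i, normLap W *ᵥ u i = lam i • u i) (v : Fin n → ℝ) :
    dotR v (normLap W *ᵥ v) = ∑ i, lam i * (dotR v (u i)) ^ 2 := by
  have hv : ∀ q, v q = ∑ i, dotR v (u i) * u i q := fun q => (expand_complete h v q).symm
  have hLv : ∀ q, (normLap W *ᵥ v) q = ∑ i, dotR v (u i) * (lam i * u i q) := by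
    intro q
    have h1 : (normLap W *ᵥ v) q = ∑ p, normLap W q p * v p := by
      simp [Matrix.mulVec, dotProduct]
    rw [h1]
    calc ∑ p, normLap W q p * v p
        = ∑ p, ∑ i, dotR v (u i) * (normLap W q p * u i p) := by
          apply Finset.sum_congr rfl; intro p _
          rw [hv p, Finset.mul_sum]
          apply Finset.sum_congr rfl; intro i _; ring
      _ = ∑ i, dotR v (u i) * ∑ p, normLap W q p * u i p := by
          rw [Finset.sum_comm]; simp [Finset.mul_sum]
      _ = ∑ i, dotR v (u i) * (lam i * u i q) := by
          apply Finset.sum_congr rfl; intro i _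
          have h2 : ∑ p, normLap W q p * u i p = (normLap W *ᵥ u i) q := by
            simp [Matrix.mulVec, dotProduct]
          rw [h2, heig i]; rfl
  calc dotR v (normLap W *ᵥ v) = ∑ q, v q * ∑ i, dotR v (u i) * (lam i * u i q) := by
        unfold dotR; exact Finset.sum_congr rfl fun q _ => by rw [hLv q]; rfl
    _ = ∑ i, lam i * (dotR v (u i)) ^ 2 := by
        simp only [Finset.mul_sum]; rw [Finset.sum_comm]
        apply Finset.sum_congr rfl; intro i _
        have : ∑ q, v q * (dotR v (u i) * (lam i * u i q))
            = (lam i * dotR v (u i)) * ∑ q, v q * u i q := by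
          rw [Finset.mul_sum]; apply Finset.sum_congr rfl; intro q _; ring
        rw [this]
        have h4 : ∑ q, v q * u i q = dotR v (u i) := rfl
        rw [h4]; ring

lemma bessel {z : Fin k → Fin n → ℝ} (hz : IsOrthonormalSys z) {w : Fin n → ℝ}
    (hw : dotR w w = 1) : ∑ a, (dotR (z a) w) ^ 2 ≤ 1 := by
  set c : Fin k → ℝ := fun a => dotR (z a) w with hc
  set S : Fin n → ℝ := fun q => ∑ a, c a * z a q with hS
  have e1 : ∑ q, w q * S q = ∑ a, c a ^ 2 := by
    simp only [hS, Finset.mul_sum]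
    rw [Finset.sum_comm]
    apply Finset.sum_congr rfl; intro a _
    have : ∑ q, w q * (c a * z a q) = c a * ∑ q, z a q * w q := by
      rw [Finset.mul_sum]; apply Finset.sum_congr rfl; intro q _; ring
    rw [this]; have h4 : ∑ q, z a q * w q = c a := rfl
    rw [h4]; ring
  have e2 : ∑ q, S q * S q = ∑ a, c a ^ 2 := by
    have : ∀ q, S q * S q = ∑ a, ∑ b, c a * c b * (z a q * z b q) := by
      intro q
      simp only [hS, Finset.sum_mul, Finset.mul_sum]
      apply Finset.sum_congr rfl; intro a _; apply Finset.sum_congr rfl; intro b _; ring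
    simp only [this]
    rw [Finset.sum_comm]
    calc ∑ a, ∑ q, ∑ b, c a * c b * (z a q * z b q)
        = ∑ a, ∑ b, c a * c b * ∑ q, z a q * z b q := by
          apply Finset.sum_congr rfl; intro a _
          rw [Finset.sum_comm]
          apply Finset.sum_congr rfl; intro b _
          rw [Finset.mul_sum]
      _ = ∑ a, c a ^ 2 := by
          apply Finset.sum_congr rfl; intro a _
          have h5 : ∀ b, (∑ q, z a q * z b q) = if a = b then 1 else 0 := fun b => hz a b
          simp only [h5, mul_ite, mul_one, mul_zero]
          simp [sq]
  have h0 : 0 ≤ dotR (fun q => w q - S q) (fun q => w q - S q) := dotR_nonneg _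
  have hexp : dotR (fun q => w q - S q) (fun q => w q - S q)
      = dotR w w - 2 * ∑ q, w q * S q + ∑ q, S q * S q := by
    unfold dotR
    have hq : ∀ q : Fin n, (w q - S q) * (w q - S q)
        = w q * w q - 2 * (w q * S q) + S q * S q := fun q => by ring
    simp only [hq]
    rw [Finset.sum_add_distrib, Finset.sum_sub_distrib, Finset.mul_sum]
  rw [hexp, hw, e1, e2] at h0
  have : ∑ a, c a ^ 2 ≤ 1 := by linarith
  exact this

end helpers2

section graph
variable {n k : ℕ}

/-- normalized indicator vectors of the parts -/
def zvec {n k : ℕ} (W : Matrix (Fin n) (Fin n) ℝ) (P : Fin n → Fin k) (a : Fin k) :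
    Fin n → ℝ :=
  fun i => if P i = a then Real.sqrt (gdeg W i) / Real.sqrt (gvol W (partSet P a)) else 0

lemma vol_pos {W : Matrix (Fin n) (Fin n) ℝ} (hd : ∀ i, 0 < gdeg W i) {P : Fin n → Fin k}
    (hP : Function.Surjective P) (a : Fin k) : 0 < gvol W (partSet P a) := by
  obtain ⟨j, hj⟩ := hP a
  exact Finset.sum_pos (fun i _ => hd i) ⟨j, by simp [partSet, hj]⟩

lemma zvec_ortho {W : Matrix (Fin n) (Fin n) ℝ} (hd : ∀ i, 0 < gdeg W i) {P : Fin n → Fin k}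
    (hP : Function.Surjective P) : IsOrthonormalSys (zvec W P) := by
  intro a b
  unfold dotR zvec
  by_cases hab : a = b
  · subst hab
    simp only [if_pos rfl]
    have hV := vol_pos hd hP a
    have hterm : ∀ i : Fin n,
        (if P i = a then Real.sqrt (gdeg W i) / Real.sqrt (gvol W (partSet P a)) else 0) *
        (if P i = a then Real.sqrt (gdeg W i) / Real.sqrt (gvol W (partSet P a)) else 0)
        = if P i = a then gdeg W i / gvol W (partSet P a) else 0 := by
      intro i
      by_cases h : P i = a
      · simp only [if_pos h]
        rw [div_mul_div_comm, Real.mul_self_sqrt (hd i).le, Real.mul_self_sqrt hV.le]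
      · simp [h]
    simp only [hterm]
    rw [← Finset.sum_filter]
    have hsum : ∑ i ∈ univ.filter (fun i => P i = a), gdeg W i / gvol W (partSet P a)
        = gvol W (partSet P a) / gvol W (partSet P a) := by
      rw [← Finset.sum_div]; rfl
    rw [hsum, div_self hV.ne']
    simp
  · rw [if_neg hab]
    apply Finset.sum_eq_zero
    intro i _
    by_cases h : P i = a
    · simp only [h, if_neg hab, mul_zero]
    · simp [h]

end graph

section graph2
variable {n k : ℕ}

lemma wcut_symm {W : Matrix (Fin n) (Fin n) ℝ} (hsym : W.IsSymm) (X Y : Finset (Fin n)) :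
    wcut W X Y = wcut W Y X := by
  unfold wcut
  refine Finset.sum_comm.trans ?_
  exact Finset.sum_congr rfl fun j _ => Finset.sum_congr rfl fun i _ => hsym.apply j i

lemma wcut_row_sum {W : Matrix (Fin n) (Fin n) ℝ} {P : Fin n → Fin k} (A : Finset (Fin n)) :
    ∑ b, wcut W A (partSet P b) = gvol W A := by
  unfold wcut gvol gdeg
  rw [Finset.sum_comm]
  exact Finset.sum_congr rfl fun i _ => Finset.sum_fiberwise univ P (W i ·)

lemma trace_term {W : Matrix (Fin n) (Fin n) ℝ} (hd : ∀ i, 0 < gdeg W i)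
    {P : Fin n → Fin k} (hP : Function.Surjective P) (a : Fin k) :
    dotR (zvec W P a) (normLap W *ᵥ zvec W P a)
      = 1 - wcut W (partSet P a) (partSet P a) / gvol W (partSet P a) := by
  have hV := vol_pos hd hP a
  have hz1 : dotR (zvec W P a) (zvec W P a) = 1 := by
    have := zvec_ortho hd hP a a; simpa using this
  have hsplit : normLap W *ᵥ zvec W P a = zvec W P a - normAdj W *ᵥ zvec W P a := by
    unfold normLap
    rw [Matrix.sub_mulVec, Matrix.one_mulVec]
  rw [hsplit]
  have hdot_sub : dotR (zvec W P a) (zvec W P a - normAdj W *ᵥ zvec W P a)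
      = dotR (zvec W P a) (zvec W P a) - dotR (zvec W P a) (normAdj W *ᵥ zvec W P a) := by
    unfold dotR
    rw [← Finset.sum_sub_distrib]
    exact Finset.sum_congr rfl fun i _ => by simp [Pi.sub_apply, mul_sub]
  rw [hdot_sub, hz1]
  congr 1
  -- dotR z (normAdj z) = wcut aa / Vol a
  have key : ∀ i j : Fin n, zvec W P a i * (normAdj W i j * zvec W P a j)
      = if P i = a then (if P j = a then W i j / gvol W (partSet P a) else 0) else 0 := by
    intro i j
    by_cases hi : P i = a
    · by_cases hj : P j = a
      · simp only [zvec, if_pos hi, if_pos hj, normAdj, Matrix.of_apply]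
        have h1 : Real.sqrt (gdeg W i) ≠ 0 := (Real.sqrt_pos.2 (hd i)).ne'
        have h2 : Real.sqrt (gdeg W j) ≠ 0 := (Real.sqrt_pos.2 (hd j)).ne'
        have h3 : Real.sqrt (gvol W (partSet P a)) * Real.sqrt (gvol W (partSet P a))
            = gvol W (partSet P a) := Real.mul_self_sqrt hV.le
        rw [show Real.sqrt (gdeg W i) / Real.sqrt (gvol W (partSet P a)) *
            (W i j / (Real.sqrt (gdeg W i) * Real.sqrt (gdeg W j)) *
              (Real.sqrt (gdeg W j) / Real.sqrt (gvol W (partSet P a))))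
            = W i j * (Real.sqrt (gdeg W i) / Real.sqrt (gdeg W i)) *
              (Real.sqrt (gdeg W j) / Real.sqrt (gdeg W j)) /
              (Real.sqrt (gvol W (partSet P a)) * Real.sqrt (gvol W (partSet P a))) from by ring]
        rw [div_self h1, div_self h2, h3, mul_one, mul_one]
      · simp [zvec, hj]
    · simp [zvec, hi]
  have e : dotR (zvec W P a) (normAdj W *ᵥ zvec W P a)
      = wcut W (partSet P a) (partSet P a) / gvol W (partSet P a) := by
    unfold dotR
    calc ∑ i, zvec W P a i * (normAdj W *ᵥ zvec W P a) i
        = ∑ i, ∑ j, zvec W P a i * (normAdj W i j * zvec W P a j) := by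
          apply Finset.sum_congr rfl; intro i _
          rw [show (normAdj W *ᵥ zvec W P a) i = ∑ j, normAdj W i j * zvec W P a j from by
            simp [Matrix.mulVec, dotProduct]]
          rw [Finset.mul_sum]
      _ = ∑ i, ∑ j, (if P i = a then (if P j = a then W i j / gvol W (partSet P a) else 0) else 0) := by
          exact Finset.sum_congr rfl fun i _ => Finset.sum_congr rfl fun j _ => key i j
      _ = ∑ i, (if P i = a then ∑ j, (if P j = a then W i j / gvol W (partSet P a) else 0) else 0) := by
          apply Finset.sum_congr rfl; intro i _
          by_cases hi : P i = a <;> simp [hi]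
      _ = ∑ i ∈ partSet P a, ∑ j ∈ partSet P a, W i j / gvol W (partSet P a) := by
          rw [← Finset.sum_filter]
          apply Finset.sum_congr rfl; intro i _
          rw [← Finset.sum_filter]; rfl
      _ = wcut W (partSet P a) (partSet P a) / gvol W (partSet P a) := by
          unfold wcut
          rw [Finset.sum_div]
          exact Finset.sum_congr rfl fun i _ => (Finset.sum_div _ _ _).symm
  rw [e]

end graph2

section graph3
variable {n k : ℕ}

lemma fkCut_eq_sum {W : Matrix (Fin n) (Fin n) ℝ} (hsym : W.IsSymm) (hd : ∀ i, 0 < gdeg W i)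
    {P : Fin n → Fin k} (hP : Function.Surjective P) :
    fkCut W P = ∑ a, (1 - wcut W (partSet P a) (partSet P a) / gvol W (partSet P a)) := by
  set V : Fin k → ℝ := fun a => gvol W (partSet P a) with hVdef
  set F : Fin k → Fin k → ℝ := fun a b => wcut W (partSet P a) (partSet P b) / V a with hFdef
  have hVpos : ∀ a, 0 < V a := fun a => vol_pos hd hP a
  have step1 : fkCut W P = ∑ a, ∑ b ∈ univ.filter (fun b => a < b), (F a b + F b a) := by
    unfold fkCut
    apply Finset.sum_congr rfl; intro a _
    apply Finset.sum_congr rfl; intro b _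
    simp only [hFdef]
    rw [wcut_symm hsym (partSet P b) (partSet P a)]
    ring
  have step2 : ∀ a, ∑ b ∈ univ.filter (fun b => a < b), (F a b + F b a)
      = ∑ b, (if a < b then F a b else 0) + ∑ b, (if a < b then F b a else 0) := by
    intro a
    rw [Finset.sum_add_distrib, Finset.sum_filter, Finset.sum_filter]
  have step3 : ∑ a, ∑ b, (if a < b then F b a else 0)
      = ∑ a, ∑ b, (if b < a then F a b else 0) := by
    rw [Finset.sum_comm]
  have step4 : ∀ a : Fin k, (∑ b, (if a < b then F a b else 0))
      + ∑ b, (if b < a then F a b else 0) = ∑ b ∈ univ.erase a, F a b := by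
    intro a
    rw [← Finset.sum_add_distrib]
    rw [show (univ.erase a : Finset (Fin k)) = univ.filter (fun b => b ≠ a) from (Finset.filter_ne' univ a).symm]
    rw [Finset.sum_filter]
    apply Finset.sum_congr rfl; intro b _
    rcases lt_trichotomy a b with h | h | h
    · simp [h, not_lt.2 h.le, h.ne']
    · simp [h]
    · simp [h, not_lt.2 h.le, h.ne]
  have step5 : ∀ a : Fin k, ∑ b ∈ univ.erase a, F a b = 1 - F a a := by
    intro a
    have h6 : ∑ b ∈ univ.erase a, F a b + F a a = ∑ b, F a b :=
      Finset.sum_erase_add univ _ (Finset.mem_univ a)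
    have h7 : ∑ b, F a b = 1 := by
      simp only [hFdef]
      rw [← Finset.sum_div, wcut_row_sum, div_self (hVpos a).ne']
    linarith [h6, h7]
  calc fkCut W P = ∑ a, ∑ b ∈ univ.filter (fun b => a < b), (F a b + F b a) := step1
    _ = ∑ a, ((∑ b, (if a < b then F a b else 0)) + ∑ b, (if a < b then F b a else 0)) := by
        exact Finset.sum_congr rfl fun a _ => step2 a
    _ = (∑ a, ∑ b, (if a < b then F a b else 0)) + ∑ a, ∑ b, (if a < b then F b a else 0) := by
        rw [Finset.sum_add_distrib]
    _ = (∑ a, ∑ b, (if a < b then F a b else 0)) + ∑ a, ∑ b, (if b < a then F a b else 0) := by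
        rw [step3]
    _ = ∑ a, ((∑ b, (if a < b then F a b else 0)) + ∑ b, (if b < a then F a b else 0)) := by
        rw [Finset.sum_add_distrib]
    _ = ∑ a, (1 - F a a) := by
        exact Finset.sum_congr rfl fun a _ => (step4 a).trans (step5 a)
    _ = ∑ a, (1 - wcut W (partSet P a) (partSet P a) / gvol W (partSet P a)) := rfl

end graph3

section kyfan

lemma card_filter_lt {n k : ℕ} (hkn : k ≤ n) :
    (univ.filter (fun i : Fin n => (i : ℕ) < k)).card = k := by
  have hset : univ.filter (fun i : Fin n => (i : ℕ) < k)
      = (univ : Finset (Fin k)).image (Fin.castLE hkn) := by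
    ext i
    simp only [Finset.mem_filter, Finset.mem_univ, true_and, Finset.mem_image]
    constructor
    · intro h; exact ⟨⟨(i : ℕ), h⟩, rfl⟩
    · rintro ⟨j, rfl⟩; exact j.2
  rw [hset, Finset.card_image_of_injective _ (Fin.castLE_injective hkn)]
  simp

lemma kyfan {n : ℕ} {lam : Fin n → ℝ} (hmono : Monotone lam) {s : Fin n → ℝ}
    (hs0 : ∀ i, 0 ≤ s i) (hs1 : ∀ i, s i ≤ 1) {k : ℕ} (hk2 : 2 ≤ k) (hkn : k ≤ n)
    (hsum : ∑ i, s i = (k : ℝ)) :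
    ∑ i ∈ univ.filter (fun i : Fin n => (i : ℕ) < k), lam i ≤ ∑ i, lam i * s i := by
  have hn : k - 1 < n := by omega
  set κ : Fin n := ⟨k - 1, hn⟩ with hκ
  have key : ∀ i : Fin n,
      lam κ * (s i - (if (i : ℕ) < k then 1 else 0))
        ≤ lam i * s i - (if (i : ℕ) < k then lam i else 0) := by
    intro i
    by_cases h : (i : ℕ) < k
    · simp only [if_pos h]
      have hle : lam i ≤ lam κ := hmono (by rw [Fin.le_def]; simp [hκ]; omega)
      nlinarith [mul_nonneg (sub_nonneg.2 hle) (sub_nonneg.2 (hs1 i))]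
    · simp only [if_neg h]
      have hle : lam κ ≤ lam i := hmono (by rw [Fin.le_def]; simp [hκ]; omega)
      have := mul_le_mul_of_nonneg_right hle (hs0 i)
      linarith
  have hcard : ∑ i : Fin n, (if (i : ℕ) < k then (1 : ℝ) else 0) = (k : ℝ) := by
    rw [Finset.sum_boole, card_filter_lt hkn]
  have h1 : ∑ i, lam κ * (s i - (if (i : ℕ) < k then 1 else 0)) = 0 := by
    rw [← Finset.mul_sum, Finset.sum_sub_distrib, hsum, hcard, sub_self, mul_zero]
  have h2 := Finset.sum_le_sum (fun i (_ : i ∈ univ) => key i)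
  rw [h1, Finset.sum_sub_distrib] at h2
  have h3 : ∑ i : Fin n, (if (i : ℕ) < k then lam i else 0)
      = ∑ i ∈ univ.filter (fun i : Fin n => (i : ℕ) < k), lam i := (Finset.sum_filter _ _).symm
  linarith [h2, h3.symm.le]

end kyfan

/-- `f_k(G) ≥ ∑_{i=1}^k λ_i`. -/
theorem statement9 {n : ℕ} (W : Matrix (Fin n) (Fin n) ℝ)
    (hsym : W.IsSymm) (hnn : ∀ i j, 0 ≤ W i j) (hdiag : ∀ i, W i i = 0)
    (hd : ∀ i, 0 < gdeg W i) (hvol : gvol W Finset.univ = 1)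
    (lam : Fin n → ℝ) (u : Fin n → Fin n → ℝ)
    (hmono : Monotone lam)
    (hortho : IsOrthonormalSys u)
    (heig : ∀ i, normLap W *ᵥ u i = lam i • u i)
    (h0 : ∀ i : Fin n, (i : ℕ) = 0 → lam i = 0) :
    ∀ k : ℕ, 2 ≤ k → k ≤ n →
      ∑ i ∈ univ.filter (fun i : Fin n => (i : ℕ) < k), lam i ≤ fkMin k W := by
  intro k hk2 hkn
  apply le_csInf
  · -- the set of cut values is nonempty
    refine ⟨fkCut W (fun j : Fin n => (⟨min (j : ℕ) (k - 1), by omega⟩ : Fin k)),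
      fun j : Fin n => (⟨min (j : ℕ) (k - 1), by omega⟩ : Fin k), ?_, rfl⟩
    intro a
    refine ⟨⟨(a : ℕ), lt_of_lt_of_le a.isLt hkn⟩, ?_⟩
    apply Fin.ext
    simp
    omega
  · rintro r ⟨P, hPsurj, rfl⟩
    have hzortho := zvec_ortho hd hPsurj
    set s : Fin n → ℝ := fun i => ∑ a, (dotR (zvec W P a) (u i)) ^ 2 with hs
    have e3 : fkCut W P = ∑ i, lam i * s i := by
      rw [fkCut_eq_sum hsym hd hPsurj]
      calc ∑ a, (1 - wcut W (partSet P a) (partSet P a) / gvol W (partSet P a))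
          = ∑ a, dotR (zvec W P a) (normLap W *ᵥ zvec W P a) :=
            Finset.sum_congr rfl fun a _ => (trace_term hd hPsurj a).symm
        _ = ∑ a, ∑ i, lam i * (dotR (zvec W P a) (u i)) ^ 2 :=
            Finset.sum_congr rfl fun a _ => rayleigh hortho heig (zvec W P a)
        _ = ∑ i, lam i * s i := by
            rw [Finset.sum_comm]
            exact Finset.sum_congr rfl fun i _ => (Finset.mul_sum _ _ _).symm
    have hs0 : ∀ i, 0 ≤ s i := fun i => Finset.sum_nonneg fun a _ => sq_nonneg _
    have hs1 : ∀ i, s i ≤ 1 := by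
      intro i
      exact bessel hzortho (by simpa using hortho i i)
    have hsum : ∑ i, s i = (k : ℝ) := by
      rw [hs, Finset.sum_comm]
      calc ∑ a, ∑ i, (dotR (zvec W P a) (u i)) ^ 2
          = ∑ a : Fin k, dotR (zvec W P a) (zvec W P a) :=
            Finset.sum_congr rfl fun a _ => parseval hortho (zvec W P a)
        _ = ∑ a : Fin k, (1 : ℝ) :=
            Finset.sum_congr rfl fun a _ => by simpa using hzortho a a
        _ = (k : ℝ) := by simp
    calc ∑ i ∈ univ.filter (fun i : Fin n => (i : ℕ) < k), lam i
        ≤ ∑ i, lam i * s i := kyfan hmono hs0 hs1 hk2 hkn hsum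
      _ = fkCut W P := e3.symm

end
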